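/- Let $\sigma\ge1$, let $C_\xi\ge1$, and let $(\rho_j)_{j\ge1}$ be nonnegative reals. Suppose the family $(\tau_{m,\lambda})$, indexed by finitely supported multi-indices $m$ and integers $\lambda$, consists of nonnegative reals satisfying $\tau_{m,0}=\delta_{m,0}$, $\tau_{m,\lambda}=0$ if $|m|<\lambda$ or $\lambda<0$, and $\tau_{m+e_j,\lambda}\le \sum_{w\le m}\binom{m}{w}C_\xi^{|w|+1}((|w|+1)!)^{\sigma}\rho^{w}\rho_j\,\tau_{m-w,\lambda-1}$ for all $m$, all $j$, and all $\lambda\ge1$. Then for all finitely supported $m\neq 0$ and $1\le\lambda\le|m|$: $\tau_{m,\lambda}\le C_\xi^{|m|}\Big(\frac{|m|!\,(|m|-1)!}{\lambda!\,(|m|-\lambda)!\,(\lambda-1)!}\Big)^{\sigma}\rho^{m}$. -/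

import Mathlib

open Finset

/-- `|m|`: the order (modulus) of a finitely supported multi-index. -/
def msize (m : ℕ →₀ ℕ) : ℕ := m.sum fun _ n => n

/-- Multi-index binomial coefficient `∏_j C(m_j, w_j)`. -/
def mchoose (m w : ℕ →₀ ℕ) : ℕ := ∏ j ∈ m.support, (m j).choose (w j)

/-- `ρ^w = ∏_j ρ_j^{w_j}`. -/
noncomputable def mpow (ρ : ℕ → ℝ) (w : ℕ →₀ ℕ) : ℝ := ∏ j ∈ w.support, ρ j ^ w j

lemma msize_add (a b : ℕ →₀ ℕ) : msize (a + b) = msize a + msize b := by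
  simp [msize, Finsupp.sum_add_index]

lemma msize_single (j c : ℕ) : msize (Finsupp.single j c) = c := by
  simp [msize, Finsupp.sum_single_index]

lemma msize_eq_zero {m : ℕ →₀ ℕ} : msize m = 0 ↔ m = 0 := by
  rw [msize, Finsupp.sum, Finset.sum_eq_zero_iff]
  simp only [Finsupp.mem_support_iff]
  constructor
  · intro h; ext i; by_cases hi : m i = 0
    · simp [hi]
    · exact absurd (h i hi) hi
  · intro h; simp [h]

lemma mpow_eq_prod (ρ : ℕ → ℝ) (w : ℕ →₀ ℕ) : mpow ρ w = w.prod fun j n => ρ j ^ n := rfl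

lemma mpow_add (ρ : ℕ → ℝ) (a b : ℕ →₀ ℕ) : mpow ρ (a + b) = mpow ρ a * mpow ρ b := by
  simp [mpow_eq_prod, Finsupp.prod_add_index, pow_add]

lemma mpow_single (ρ : ℕ → ℝ) (j c : ℕ) : mpow ρ (Finsupp.single j c) = ρ j ^ c := by
  simp [mpow_eq_prod, Finsupp.prod_single_index]

lemma mpow_nonneg {ρ : ℕ → ℝ} (hρ : ∀ j, 0 ≤ ρ j) (w : ℕ →₀ ℕ) : 0 ≤ mpow ρ w :=
  Finset.prod_nonneg fun j _ => pow_nonneg (hρ j) _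

lemma msize_mono {a b : ℕ →₀ ℕ} (h : a ≤ b) : msize a ≤ msize b := by
  obtain ⟨c, rfl⟩ := exists_add_of_le h
  simp [msize_add]

lemma msub_add_cancel {a b : ℕ →₀ ℕ} (h : a ≤ b) : b - a + a = b :=
  tsub_add_cancel_of_le h

lemma msize_sub {a b : ℕ →₀ ℕ} (h : a ≤ b) : msize (b - a) = msize b - msize a := by
  have := msize_add (b - a) a
  rw [msub_add_cancel h] at this
  omega

lemma mchoose_self (m : ℕ →₀ ℕ) : mchoose m m = 1 := by simp [mchoose]

-- Pascal splitting of a weighted sum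
lemma pascal_sum (n : ℕ) (g : ℕ → ℝ) :
    ∑ i ∈ range (n + 2), ((n + 1).choose i : ℝ) * g i
      = ∑ i ∈ range (n + 1), (n.choose i : ℝ) * g i
        + ∑ i ∈ range (n + 1), (n.choose i : ℝ) * g (i + 1) := by
  rw [Finset.sum_range_succ'] 
  have h1 : ∀ i, ((n + 1).choose (i + 1) : ℝ) = n.choose i + n.choose (i + 1) := by
    intro i; rw [Nat.choose_succ_succ]; push_cast; ring
  simp only [h1, add_mul]
  rw [Finset.sum_add_distrib]
  have h2 : ∑ i ∈ range (n + 1), (n.choose (i + 1) : ℝ) * g (i + 1)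
      = ∑ i ∈ range (n + 1), (n.choose i : ℝ) * g i - (n.choose 0 : ℝ) * g 0 := by
    rw [eq_sub_iff_add_eq, ← Finset.sum_range_succ' (fun i => (n.choose i : ℝ) * g i) (n + 1)]
    rw [Finset.sum_range_succ]
    simp [Nat.choose_eq_zero_of_lt (Nat.lt_succ_self n)]
  rw [h2]
  simp [Nat.choose_zero_right]
  ring

lemma vandermonde_sum (b : ℕ) : ∀ (c : ℕ) (f : ℕ → ℝ),
    ∑ r ∈ range (b + c + 1), ((b + c).choose r : ℝ) * f r
      = ∑ i ∈ range (b + 1), ∑ k ∈ range (c + 1),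
          (b.choose i : ℝ) * (c.choose k : ℝ) * f (i + k) := by
  induction b with
  | zero => intro c f; simp
  | succ b ih =>
    intro c f
    have e1 : b + 1 + c + 1 = (b + c) + 2 := by ring
    have e2 : (b + 1 + c) = (b + c) + 1 := by ring
    rw [e1, e2, pascal_sum (b + c) f, ih c f, ih c (fun r => f (r + 1))]
    have hr : ∑ i ∈ range (b + 2), ∑ k ∈ range (c + 1),
          ((b + 1).choose i : ℝ) * (c.choose k : ℝ) * f (i + k)
        = ∑ i ∈ range (b + 2), ((b + 1).choose i : ℝ)
            * ∑ k ∈ range (c + 1), (c.choose k : ℝ) * f (i + k) := by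
      refine Finset.sum_congr rfl fun i _ => ?_
      rw [Finset.mul_sum]; exact Finset.sum_congr rfl fun k _ => by ring
    have hb2 : b + 1 + 1 = b + 2 := rfl
    rw [hb2, hr, pascal_sum b (fun i => ∑ k ∈ range (c + 1), (c.choose k : ℝ) * f (i + k))]
    congr 1
    · refine Finset.sum_congr rfl fun i _ => ?_
      rw [Finset.mul_sum]; exact Finset.sum_congr rfl fun k _ => by ring
    · refine Finset.sum_congr rfl fun i _ => ?_
      rw [Finset.mul_sum]
      refine Finset.sum_congr rfl fun k _ => ?_
      have : i + 1 + k = i + k + 1 := by ring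
      rw [this]; ring

-- the key nat identity: ∑_{i ≤ s} C(i,a) C(s-i,b) = C(s+1, a+b+1)
lemma sum_range_choose_eq (a n : ℕ) :
    ∑ i ∈ range (n + 1), Nat.choose i a = Nat.choose (n + 1) (a + 1) := by
  rw [← Nat.sum_Icc_choose n a]
  symm
  apply Finset.sum_subset
  · intro x hx; simp only [Finset.mem_Icc] at hx; simp only [Finset.mem_range]; omega
  · intro x hx hx2
    simp only [Finset.mem_range] at hx
    simp only [Finset.mem_Icc] at hx2
    exact Nat.choose_eq_zero_of_lt (by omega)

lemma key_nat (a : ℕ) : ∀ s b : ℕ,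
    ∑ i ∈ range (s + 1), (Nat.choose i a) * (Nat.choose (s - i) b)
      = Nat.choose (s + 1) (a + b + 1) := by
  intro s
  induction s with
  | zero =>
    intro b
    rw [zero_add, Finset.range_one, Finset.sum_singleton]
    simp only [Nat.zero_sub]
    rcases Nat.eq_zero_or_pos a with ha | ha
    · rcases Nat.eq_zero_or_pos b with hb | hb
      · simp [ha, hb]
      · subst ha
        rw [Nat.choose_eq_zero_of_lt hb, mul_zero]
        symm; exact Nat.choose_eq_zero_of_lt (by omega)
    · rw [Nat.choose_eq_zero_of_lt ha, zero_mul]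
      symm; exact Nat.choose_eq_zero_of_lt (by omega)
  | succ s ih =>
    intro b
    cases b with
    | zero =>
      simp only [Nat.choose_zero_right, mul_one]
      rw [sum_range_choose_eq]
    | succ b' =>
      rw [Finset.sum_range_succ]
      have hz : Nat.choose (s + 1 - (s + 1)) (b' + 1) = 0 := by
        simp [Nat.choose_eq_zero_of_lt]
      rw [hz, mul_zero, add_zero]
      have hsplit : ∀ i ∈ range (s + 1),
          Nat.choose i a * Nat.choose (s + 1 - i) (b' + 1)
            = Nat.choose i a * Nat.choose (s - i) b'
              + Nat.choose i a * Nat.choose (s - i) (b' + 1) := by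
        intro i hi
        simp only [Finset.mem_range] at hi
        have : s + 1 - i = (s - i) + 1 := by omega
        rw [this, Nat.choose_succ_succ, Nat.mul_add]
      rw [Finset.sum_congr rfl hsplit, Finset.sum_add_distrib, ih b', ih (b' + 1)]
      have : a + (b' + 1) + 1 = (a + b' + 1) + 1 := by ring
      rw [this, Nat.choose_succ_succ (s + 1) (a + b' + 1)]

lemma rpow_superadd {σ : ℝ} (hσ : 1 ≤ σ) {x y : ℝ} (hx : 0 ≤ x) (hy : 0 ≤ y) :
    x ^ σ + y ^ σ ≤ (x + y) ^ σ := by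
  have h := NNReal.add_rpow_le_rpow_add x.toNNReal y.toNNReal hσ
  have := (NNReal.coe_le_coe).2 h
  simpa [NNReal.coe_rpow, Real.coe_toNNReal x hx, Real.coe_toNNReal y hy,
    Real.toNNReal_add hx hy] using this

lemma sum_rpow_le_rpow_sum {σ : ℝ} (hσ : 1 ≤ σ) {ι : Type*} (s : Finset ι) (g : ι → ℝ)
    (hg : ∀ i ∈ s, 0 ≤ g i) : ∑ i ∈ s, g i ^ σ ≤ (∑ i ∈ s, g i) ^ σ := by
  classical
  induction s using Finset.cons_induction with
  | empty => simp [Real.zero_rpow (by positivity : σ ≠ 0)]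
  | cons a s ha ih =>
    rw [Finset.sum_cons, Finset.sum_cons]
    have h1 : ∀ i ∈ s, 0 ≤ g i := fun i hi => hg i (Finset.mem_cons_of_mem hi)
    calc g a ^ σ + ∑ i ∈ s, g i ^ σ ≤ g a ^ σ + (∑ i ∈ s, g i) ^ σ := by
          gcongr; exact ih h1
      _ ≤ (g a + ∑ i ∈ s, g i) ^ σ :=
          rpow_superadd hσ (hg a (Finset.mem_cons_self a s)) (Finset.sum_nonneg h1)

lemma Iic_zero_finsupp : Finset.Iic (0 : ℕ →₀ ℕ) = {0} := by
  ext w; simp [Finset.mem_Iic, le_zero_iff]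

lemma mem_Iic_add_single {a b : ℕ} {g : ℕ →₀ ℕ} (ha : g a = 0) (w : ℕ →₀ ℕ) :
    w ∈ Finset.Iic (Finsupp.single a b + g) ↔ w a ≤ b ∧ w.erase a ≤ g := by
  simp only [Finset.mem_Iic, Finsupp.le_def]
  constructor
  · intro h
    constructor
    · have := h a; simpa [ha] using this
    · intro j
      by_cases hj : j = a
      · subst hj; simp [Finsupp.erase_same]
      · have := h j; simpa [Finsupp.erase_ne hj, Finsupp.single_apply, Ne.symm hj] using this
  · rintro ⟨h1, h2⟩ j
    by_cases hj : j = a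
    · subst hj; simpa [ha] using h1
    · have := h2 j; simp [Finsupp.erase_ne hj] at this
      simpa [Finsupp.single_apply, Ne.symm hj] using this

lemma sum_Iic_mchoose (m : ℕ →₀ ℕ) : ∀ f : ℕ → ℝ,
    ∑ w ∈ Finset.Iic m, (mchoose m w : ℝ) * f (msize w)
      = ∑ k ∈ range (msize m + 1), ((msize m).choose k : ℝ) * f k := by
  induction m using Finsupp.induction with
  | zero =>
    intro f
    rw [Iic_zero_finsupp]
    simp [mchoose, msize]
  | single_add a b g ha hb ih =>
    intro f
    have hga : g a = 0 := Finsupp.notMem_support_iff.mp ha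
    -- rewrite LHS as a sum over the product
    have hbij : ∑ w ∈ Finset.Iic (Finsupp.single a b + g), (mchoose (Finsupp.single a b + g) w : ℝ) * f (msize w)
        = ∑ p ∈ (range (b + 1)) ×ˢ (Finset.Iic g),
            (mchoose (Finsupp.single a b + g) (Finsupp.single a p.1 + p.2) : ℝ)
              * f (msize (Finsupp.single a p.1 + p.2)) := by
      refine Finset.sum_nbij' (i := fun w => ((w a, w.erase a) : ℕ × (ℕ →₀ ℕ)))
        (j := fun p => Finsupp.single a p.1 + p.2) ?_ ?_ ?_ ?_ ?_
      · intro w hw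
        rw [mem_Iic_add_single hga] at hw
        simp only [Finset.mem_product, Finset.mem_range, Finset.mem_Iic]
        exact ⟨by omega, hw.2⟩
      · intro p hp
        simp only [Finset.mem_product, Finset.mem_range, Finset.mem_Iic] at hp
        rw [mem_Iic_add_single hga]
        have hpa : p.2 a = 0 := by
          have := hp.2 a; rw [hga] at this; omega
        constructor
        · simp [Finsupp.single_apply, hpa]; omega
        · have : (Finsupp.single a p.1 + p.2).erase a = p.2 := by
            ext j
            by_cases hj : j = a
            · subst hj; simp [Finsupp.erase_same, hpa]
            · simp [Finsupp.erase_ne hj, Finsupp.single_apply, Ne.symm hj]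
          rw [this]; exact hp.2
      · intro w hw
        simp only
        exact Finsupp.single_add_erase a w
      · intro p hp
        simp only [Finset.mem_product, Finset.mem_range, Finset.mem_Iic] at hp
        have hpa : p.2 a = 0 := by
          have := hp.2 a; rw [hga] at this; omega
        have h1 : (Finsupp.single a p.1 + p.2) a = p.1 := by simp [hpa]
        have h2 : (Finsupp.single a p.1 + p.2).erase a = p.2 := by
          ext j
          by_cases hj : j = a
          · subst hj; simp [Finsupp.erase_same, hpa]
          · simp [Finsupp.erase_ne hj, Finsupp.single_apply, Ne.symm hj]
        rw [h1, h2]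
      · intro w hw
        simp only
        rw [Finsupp.single_add_erase a w]
    rw [hbij]
    -- compute the terms
    have hterm : ∀ p ∈ (range (b + 1)) ×ˢ (Finset.Iic g),
        (mchoose (Finsupp.single a b + g) (Finsupp.single a p.1 + p.2) : ℝ)
            * f (msize (Finsupp.single a p.1 + p.2))
          = (b.choose p.1 : ℝ) * ((mchoose g p.2 : ℝ) * f (p.1 + msize p.2)) := by
      rintro ⟨i, w⟩ hp
      simp only [Finset.mem_product, Finset.mem_range, Finset.mem_Iic] at hp
      have hwa : w a = 0 := by
        have := hp.2 a; rw [hga] at this; omega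
      have hsupp : (Finsupp.single a b + g).support = insert a g.support := by
        rw [Finsupp.support_add_eq]
        · rw [Finsupp.support_single_ne_zero a hb]; rfl
        · rw [Finsupp.support_single_ne_zero a hb]
          simp [Finset.disjoint_singleton_left, ha]
      have hmc : mchoose (Finsupp.single a b + g) (Finsupp.single a i + w)
          = b.choose i * mchoose g w := by
        rw [mchoose, hsupp, Finset.prod_insert ha]
        congr 1
        · simp [hga, hwa]
        · refine Finset.prod_congr rfl fun j hj => ?_
          have hja : j ≠ a := fun h => ha (h ▸ hj)
          simp [Finsupp.single_apply, Ne.symm hja]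
      have hms : msize (Finsupp.single a i + w) = i + msize w := by
        rw [msize_add, msize_single]
      rw [hmc, hms]
      push_cast
      ring
    rw [Finset.sum_congr rfl hterm, Finset.sum_product]
    have hIH : ∀ i, ∑ w ∈ Finset.Iic g, (mchoose g w : ℝ) * f (i + msize w)
        = ∑ k ∈ range (msize g + 1), ((msize g).choose k : ℝ) * f (i + k) := by
      intro i; exact ih (fun k => f (i + k))
    have : ∀ i ∈ range (b + 1),
        ∑ w ∈ Finset.Iic g, (b.choose i : ℝ) * ((mchoose g w : ℝ) * f (i + msize w))
          = ∑ k ∈ range (msize g + 1), (b.choose i : ℝ) * (((msize g).choose k : ℝ) * f (i + k)) := by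
      intro i _
      rw [← Finset.mul_sum, hIH i, Finset.mul_sum]
    rw [Finset.sum_congr rfl this]
    have hmsz : msize (Finsupp.single a b + g) = b + msize g := by
      rw [msize_add, msize_single]
    rw [hmsz, vandermonde_sum b (msize g) f]
    refine Finset.sum_congr rfl fun i _ => Finset.sum_congr rfl fun k _ => by ring

lemma nat_sum (N l : ℕ) (hl : 2 ≤ l) (hlN : l ≤ N + 1) :
    ∑ k ∈ range (N + 2 - l), (k + 1) * Nat.choose (N - 1 - k) (l - 2)
      = Nat.choose (N + 1) l := by
  have h := key_nat 1 N (l - 2)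
  have hll : 1 + (l - 2) + 1 = l := by omega
  rw [hll] at h
  rw [Finset.sum_range_succ'] at h
  simp only [Nat.choose_one_right, Nat.zero_sub] at h
  rw [zero_mul, add_zero] at h
  rw [← h]
  symm
  rw [show ∀ S : Finset ℕ, ∑ i ∈ S, (i + 1) * (N - (i + 1)).choose (l - 2)
      = ∑ i ∈ S, (i + 1) * (N - 1 - i).choose (l - 2) from fun S =>
    Finset.sum_congr rfl fun i _ => by rw [show N - (i + 1) = N - 1 - i from by omega]]
  symm
  apply Finset.sum_subset
  · intro k hk
    simp only [Finset.mem_range] at hk ⊢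
    omega
  · intro k hk hk2
    simp only [Finset.mem_range] at hk hk2
    rw [Nat.choose_eq_zero_of_lt (by omega), mul_zero]

lemma key_real (N l : ℕ) (hl : 2 ≤ l) (hlN : l ≤ N + 1) :
    ∑ k ∈ range (N + 1), (if k + l ≤ N + 1 then
        (N.choose k : ℝ) * (((k+1).factorial : ℝ) *
          (((N-k).factorial : ℝ) * (((N-k) - 1).factorial : ℝ) /
            (((l-1).factorial : ℝ) * (((N-k) - (l-1)).factorial : ℝ)
              * (((l-1) - 1).factorial : ℝ))))
      else 0)
    = ((N+1).factorial : ℝ) * (N.factorial : ℝ)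
        / ((l.factorial : ℝ) * ((N+1-l).factorial : ℝ) * ((l-1).factorial : ℝ)) := by
  have hstep1 : ∀ k ∈ range (N + 1), (if k + l ≤ N + 1 then
        (N.choose k : ℝ) * (((k+1).factorial : ℝ) *
          (((N-k).factorial : ℝ) * (((N-k) - 1).factorial : ℝ) /
            (((l-1).factorial : ℝ) * (((N-k) - (l-1)).factorial : ℝ)
              * (((l-1) - 1).factorial : ℝ))))
      else 0)
      = (if k ∈ range (N + 2 - l) then
        (N.choose k : ℝ) * (((k+1).factorial : ℝ) *
          (((N-k).factorial : ℝ) * (((N-k) - 1).factorial : ℝ) /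
            (((l-1).factorial : ℝ) * (((N-k) - (l-1)).factorial : ℝ)
              * (((l-1) - 1).factorial : ℝ))))
      else 0) := by
    intro k _
    refine if_congr ?_ rfl rfl
    simp only [Finset.mem_range]; omega
  rw [Finset.sum_congr rfl hstep1, Finset.sum_ite_mem,
    Finset.inter_eq_right.mpr (by intro k hk; simp only [Finset.mem_range] at *; omega)]
  have hterm : ∀ k ∈ range (N + 2 - l),
      (N.choose k : ℝ) * (((k+1).factorial : ℝ) *
          (((N-k).factorial : ℝ) * (((N-k) - 1).factorial : ℝ) /
            (((l-1).factorial : ℝ) * (((N-k) - (l-1)).factorial : ℝ)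
              * (((l-1) - 1).factorial : ℝ))))
        = (N.factorial : ℝ) / ((l-1).factorial : ℝ)
            * (((k + 1) * Nat.choose (N - 1 - k) (l - 2) : ℕ) : ℝ) := by
    intro k hk
    simp only [Finset.mem_range] at hk
    obtain ⟨d, rfl⟩ : ∃ d, N = k + d + 1 := ⟨N - k - 1, by omega⟩
    obtain ⟨e, rfl⟩ : ∃ e, l = e + 2 := ⟨l - 2, by omega⟩
    have hde : e ≤ d := by omega
    have h1 : k + d + 1 - k = d + 1 := by omega
    have h2 : d + 1 - 1 = d := by omega
    have h3 : e + 2 - 1 - 1 = e := by omega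
    have h4 : e + 2 - 1 = e + 1 := by omega
    have h5 : d + 1 - (e + 1) = d - e := by omega
    have h6 : k + d + 1 - 1 - k = d := by omega
    have h7 : e + 2 - 2 = e := by omega
    rw [h1, h2, h3, h4, h5, h6, h7]
    rw [Nat.cast_choose ℝ (by omega : k ≤ k + d + 1), h1]
    push_cast
    rw [Nat.cast_choose ℝ hde]
    rw [Nat.factorial_succ k]
    have f1 : ((k).factorial : ℝ) ≠ 0 := by positivity
    have f2 : ((d+1).factorial : ℝ) ≠ 0 := by positivity
    have f3 : ((e+1).factorial : ℝ) ≠ 0 := by positivity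
    have f4 : ((d-e).factorial : ℝ) ≠ 0 := by positivity
    have f5 : ((e).factorial : ℝ) ≠ 0 := by positivity
    push_cast
    field_simp
  rw [Finset.sum_congr rfl hterm, ← Finset.mul_sum, ← Nat.cast_sum,
    nat_sum N l hl hlN]
  rw [Nat.cast_choose ℝ (by omega : l ≤ N + 1)]
  have f1 : ((l-1).factorial : ℝ) ≠ 0 := by positivity
  have f2 : ((l).factorial : ℝ) ≠ 0 := by positivity
  have f3 : ((N+1-l).factorial : ℝ) ≠ 0 := by positivity
  field_simp

theorem stmt17 (σ Cξ : ℝ) (ρ : ℕ → ℝ) (T : (ℕ →₀ ℕ) → ℤ → ℝ)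
    (hσ : 1 ≤ σ) (hCξ : 1 ≤ Cξ) (hρ : ∀ j, 0 ≤ ρ j)
    (hTnonneg : ∀ m l, 0 ≤ T m l)
    (hinit : ∀ m : ℕ →₀ ℕ, T m 0 = if m = 0 then 1 else 0)
    (hvanish : ∀ (m : ℕ →₀ ℕ) (l : ℤ), ((msize m : ℤ) < l ∨ l < 0) → T m l = 0)
    (hrec : ∀ (m : ℕ →₀ ℕ) (j : ℕ) (l : ℤ), 1 ≤ l →
      T (m + Finsupp.single j 1) l ≤
        ∑ w ∈ Finset.Iic m, (mchoose m w : ℝ) * Cξ ^ (msize w + 1)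
          * (((msize w + 1).factorial : ℝ)) ^ σ * mpow ρ w * ρ j * T (m - w) (l - 1)) :
    ∀ m : ℕ →₀ ℕ, m ≠ 0 → ∀ l : ℕ, 1 ≤ l → l ≤ msize m →
      T m (l : ℤ) ≤ Cξ ^ msize m
        * ((((msize m).factorial : ℝ) * ((msize m - 1).factorial : ℝ))
            / ((l.factorial : ℝ) * ((msize m - l).factorial : ℝ) * ((l - 1).factorial : ℝ))) ^ σ
        * mpow ρ m := by
  have hCξ0 : (0:ℝ) ≤ Cξ := le_trans zero_le_one hCξ
  have hσ0 : σ ≠ 0 := by intro h; rw [h] at hσ; linarith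
  suffices H : ∀ M : ℕ, ∀ m : ℕ →₀ ℕ, msize m = M → m ≠ 0 → ∀ l : ℕ, 1 ≤ l → l ≤ msize m →
      T m (l : ℤ) ≤ Cξ ^ msize m
        * ((((msize m).factorial : ℝ) * ((msize m - 1).factorial : ℝ))
            / ((l.factorial : ℝ) * ((msize m - l).factorial : ℝ) * ((l - 1).factorial : ℝ))) ^ σ
        * mpow ρ m by
    intro m hm l hl1 hl2; exact H (msize m) m rfl hm l hl1 hl2
  intro M
  induction M using Nat.strong_induction_on with
  | _ M IH =>
  intro m hM hm l hl1 hl2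
  -- pick a coordinate in the support
  obtain ⟨j, hj⟩ := Finsupp.support_nonempty_iff.mpr hm
  have hmj : m j ≠ 0 := Finsupp.mem_support_iff.mp hj
  have hsle : Finsupp.single j 1 ≤ m := Finsupp.single_le_iff.mpr (by omega)
  set m' := m - Finsupp.single j 1 with hm'def
  have hm'add : m' + Finsupp.single j 1 = m := msub_add_cancel hsle
  set N := msize m' with hNdef
  have hMN : msize m = N + 1 := by
    rw [← hm'add, msize_add, msize_single]
  have hmm' : mpow ρ m = mpow ρ m' * ρ j := by
    rw [← hm'add, mpow_add, mpow_single, pow_one]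
  have hrec' := hrec m' j (l : ℤ) (by exact_mod_cast hl1)
  rw [hm'add] at hrec'
  by_cases hl1' : l = 1
  · -- base case l = 1
    subst hl1'
    rw [Nat.cast_one] at hrec'
    have hsum : ∑ w ∈ Finset.Iic m', (mchoose m' w : ℝ) * Cξ ^ (msize w + 1)
          * (((msize w + 1).factorial : ℝ)) ^ σ * mpow ρ w * ρ j * T (m' - w) ((1:ℤ) - 1)
        = Cξ ^ (N + 1) * (((N + 1).factorial : ℝ)) ^ σ * mpow ρ m' * ρ j := by
      rw [Finset.sum_eq_single_of_mem m' (Finset.mem_Iic.mpr le_rfl)]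
      · have : (1:ℤ) - 1 = 0 := by ring
        rw [this, hinit, if_pos (by simp), mchoose_self]
        push_cast
        ring
      · intro w hw hne
        have hwle : w ≤ m' := Finset.mem_Iic.mp hw
        have : m' - w ≠ 0 := by
          intro h0
          apply hne
          have := msub_add_cancel hwle
          rw [h0, zero_add] at this
          exact this
        have h10 : (1:ℤ) - 1 = 0 := by ring
        rw [h10, hinit, if_neg this, mul_zero]
    rw [hsum] at hrec'
    refine le_trans hrec' ?_
    have hfrac : ((((msize m).factorial : ℝ) * ((msize m - 1).factorial : ℝ))
        / (((1:ℕ).factorial : ℝ) * ((msize m - 1).factorial : ℝ) * (((1:ℕ) - 1).factorial : ℝ)))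
        = ((N+1).factorial : ℝ) := by
      rw [hMN]
      have : N + 1 - 1 = N := by omega
      rw [this]
      have hf : ((N).factorial : ℝ) ≠ 0 := by positivity
      simp [Nat.factorial]
      field_simp
    rw [hfrac, hMN, hmm']
    ring_nf
    exact le_refl _
  · -- inductive case l ≥ 2
    have hl2' : 2 ≤ l := by omega
    have hlN : l ≤ N + 1 := by rw [hMN] at hl2; exact hl2
    set Q : ℕ → ℝ := fun k => ((N-k).factorial : ℝ) * (((N-k) - 1).factorial : ℝ) /
        (((l-1).factorial : ℝ) * (((N-k) - (l-1)).factorial : ℝ) * (((l-1) - 1).factorial : ℝ))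
      with hQdef
    have hQ0 : ∀ k, 0 ≤ Q k := by
      intro k; rw [hQdef]; positivity
    set x : ℕ → ℝ := fun k => ((k+1).factorial : ℝ) * Q k with hxdef
    have hx0 : ∀ k, 0 ≤ x k := fun k => mul_nonneg (by positivity) (hQ0 k)
    set Φ : ℕ → ℝ := fun k => if k + l ≤ N + 1 then Cξ^(N+1) * (x k) ^ σ else 0 with hΦdef
    -- termwise bound
    have hstep1 : ∀ w ∈ Finset.Iic m',
        (mchoose m' w : ℝ) * Cξ ^ (msize w + 1)
          * (((msize w + 1).factorial : ℝ)) ^ σ * mpow ρ w * ρ j * T (m' - w) ((l:ℤ) - 1)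
        ≤ (mchoose m' w : ℝ) * Φ (msize w) * (mpow ρ m' * ρ j) := by
      intro w hw
      have hwle : w ≤ m' := Finset.mem_Iic.mp hw
      have hkN : msize w ≤ N := msize_mono hwle
      have hms : msize (m' - w) = N - msize w := msize_sub hwle
      by_cases hcase : msize w + l ≤ N + 1
      · -- use the induction hypothesis
        have hne : m' - w ≠ 0 := by
          intro h0
          have := msize_eq_zero.mpr h0
          rw [hms] at this
          omega
        have hIH := IH (N - msize w) (by omega) (m' - w) hms hne (l - 1)
          (by omega) (by rw [hms]; omega)
        rw [hms] at hIH
        have hcast : ((l:ℤ) - 1) = (((l - 1 : ℕ)) : ℤ) := by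
          have : (1:ℕ) ≤ l := hl1
          push_cast [this]
          ring
        rw [hcast]
        calc (mchoose m' w : ℝ) * Cξ ^ (msize w + 1)
              * (((msize w + 1).factorial : ℝ)) ^ σ * mpow ρ w * ρ j * T (m' - w) (((l - 1:ℕ)) : ℤ)
            ≤ (mchoose m' w : ℝ) * Cξ ^ (msize w + 1)
              * (((msize w + 1).factorial : ℝ)) ^ σ * mpow ρ w * ρ j
              * (Cξ ^ (N - msize w) * (Q (msize w)) ^ σ * mpow ρ (m' - w)) := by
              gcongr
              all_goals try exact hIH
              all_goals
                have h1 : (0:ℝ) ≤ mpow ρ w := mpow_nonneg hρ w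
                have h2 : (0:ℝ) ≤ (((msize w + 1).factorial : ℝ)) ^ σ :=
                  Real.rpow_nonneg (by positivity) σ
                have h3 : (0:ℝ) ≤ (mchoose m' w : ℝ) := by positivity
                exact mul_nonneg (mul_nonneg (mul_nonneg (mul_nonneg h3
                  (by positivity)) h2) h1) (hρ j)
          _ = (mchoose m' w : ℝ) * Φ (msize w) * (mpow ρ m' * ρ j) := by
              rw [hΦdef]
              simp only [if_pos hcase]
              rw [hxdef]
              have hmulpow : Cξ ^ (msize w + 1) * Cξ ^ (N - msize w) = Cξ ^ (N + 1) := by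
                rw [← pow_add]
                congr 1
                omega
              have hmpw : mpow ρ w * mpow ρ (m' - w) = mpow ρ m' := by
                rw [← mpow_add]
                congr 1
                rw [add_comm]
                exact msub_add_cancel hwle
              have hrpow : (((msize w + 1).factorial : ℝ) * Q (msize w)) ^ σ
                  = (((msize w + 1).factorial : ℝ)) ^ σ * (Q (msize w)) ^ σ :=
                Real.mul_rpow (by positivity) (hQ0 _)
              rw [hrpow]
              rw [← hmulpow, ← hmpw]
              ring
      · -- vanishing term
        have hvan : T (m' - w) ((l:ℤ) - 1) = 0 := by
          apply hvanish
          left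
          rw [hms]
          omega
        rw [hvan, mul_zero, hΦdef]
        simp only [if_neg hcase]
        simp
    have hstep2 : ∑ w ∈ Finset.Iic m', (mchoose m' w : ℝ) * Φ (msize w) * (mpow ρ m' * ρ j)
        = (∑ k ∈ Finset.range (N + 1), ((N).choose k : ℝ) * Φ k) * (mpow ρ m' * ρ j) := by
      rw [← Finset.sum_mul, sum_Iic_mchoose m' Φ]
    -- bound the inner sum
    set y : ℕ → ℝ := fun k => if k + l ≤ N + 1 then ((N).choose k : ℝ) * x k else 0 with hydef
    have hy0 : ∀ k, 0 ≤ y k := by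
      intro k; rw [hydef]
      dsimp only
      split
      · exact mul_nonneg (by positivity) (hx0 k)
      · exact le_refl 0
    have hstep3 : ∑ k ∈ Finset.range (N + 1), ((N).choose k : ℝ) * Φ k
        ≤ Cξ^(N+1) * ∑ k ∈ Finset.range (N + 1), (y k) ^ σ := by
      rw [Finset.mul_sum]
      apply Finset.sum_le_sum
      intro k hk
      simp only [Finset.mem_range] at hk
      rw [hΦdef, hydef]
      dsimp only
      by_cases hcase : k + l ≤ N + 1
      · rw [if_pos hcase, if_pos hcase]
        have hcc : (1:ℝ) ≤ ((N).choose k : ℝ) := by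
          have := Nat.choose_pos (by omega : k ≤ N)
          exact_mod_cast this
        have h1 : ((N).choose k : ℝ) * (x k) ^ σ ≤ (((N).choose k : ℝ) * x k) ^ σ := by
          have hxσ : 0 ≤ (x k) ^ σ := Real.rpow_nonneg (hx0 k) σ
          have hCσ : ((N).choose k : ℝ) ≤ ((N).choose k : ℝ) ^ σ := by
            calc ((N).choose k : ℝ) = ((N).choose k : ℝ) ^ (1:ℝ) := (Real.rpow_one _).symm
              _ ≤ ((N).choose k : ℝ) ^ σ := Real.rpow_le_rpow_of_exponent_le hcc hσ
          calc ((N).choose k : ℝ) * (x k) ^ σ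
              ≤ ((N).choose k : ℝ) ^ σ * (x k) ^ σ := mul_le_mul_of_nonneg_right hCσ hxσ
            _ = (((N).choose k : ℝ) * x k) ^ σ :=
                (Real.mul_rpow (by positivity) (hx0 k)).symm
        calc ((N).choose k : ℝ) * (Cξ^(N+1) * (x k) ^ σ)
            = Cξ^(N+1) * (((N).choose k : ℝ) * (x k) ^ σ) := by ring
          _ ≤ Cξ^(N+1) * (((N).choose k : ℝ) * x k) ^ σ := by
              apply mul_le_mul_of_nonneg_left h1 (by positivity)
      · rw [if_neg hcase, if_neg hcase]
        rw [Real.zero_rpow hσ0]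
        simp
    have hstep4 : ∑ k ∈ Finset.range (N + 1), (y k) ^ σ
        ≤ (∑ k ∈ Finset.range (N + 1), y k) ^ σ :=
      sum_rpow_le_rpow_sum hσ (Finset.range (N+1)) y (fun k _ => hy0 k)
    have hstep5 : ∑ k ∈ Finset.range (N + 1), y k
        = ((N+1).factorial : ℝ) * ((N).factorial : ℝ)
            / ((l.factorial : ℝ) * ((N+1-l).factorial : ℝ) * ((l-1).factorial : ℝ)) := by
      rw [hydef]
      have := key_real N l hl2' hlN
      rw [← this]
    -- put it together
    have hfinal : T m (l:ℤ) ≤ Cξ^(N+1) * (((N+1).factorial : ℝ) * ((N).factorial : ℝ)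
            / ((l.factorial : ℝ) * ((N+1-l).factorial : ℝ) * ((l-1).factorial : ℝ))) ^ σ
          * (mpow ρ m' * ρ j) := by
      refine le_trans hrec' (le_trans (Finset.sum_le_sum hstep1) ?_)
      rw [hstep2]
      have hc0 : (0:ℝ) ≤ mpow ρ m' * ρ j := mul_nonneg (mpow_nonneg hρ m') (hρ j)
      have h35 : ∑ k ∈ Finset.range (N + 1), ((N).choose k : ℝ) * Φ k
          ≤ Cξ^(N+1) * (((N+1).factorial : ℝ) * ((N).factorial : ℝ)
            / ((l.factorial : ℝ) * ((N+1-l).factorial : ℝ) * ((l-1).factorial : ℝ))) ^ σ := by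
        refine le_trans hstep3 ?_
        apply mul_le_mul_of_nonneg_left _ (by positivity)
        rw [← hstep5]
        exact hstep4
      calc (∑ k ∈ Finset.range (N + 1), ((N).choose k : ℝ) * Φ k) * (mpow ρ m' * ρ j)
          ≤ (Cξ^(N+1) * (((N+1).factorial : ℝ) * ((N).factorial : ℝ)
            / ((l.factorial : ℝ) * ((N+1-l).factorial : ℝ) * ((l-1).factorial : ℝ))) ^ σ)
            * (mpow ρ m' * ρ j) := mul_le_mul_of_nonneg_right h35 hc0
        _ = _ := by ring
    refine le_trans hfinal ?_
    rw [hMN, hmm']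
    have e1 : N + 1 - 1 = N := by omega
    rw [e1]
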